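/- Let M be a real nonassociative algebra with unit having a basis {1, i, j, k} whose multiplication is given by table (Tn) with parameters a, b, c, d, f, g, h, e ∈ ℝ, and assume that for every q ∈ M with q² = −1 and every y ∈ M one has (q, q, y) = 0 and (y, q, q) = 0. If there exists q ∈ M with q² = −1 that does not lie in span_ℝ{1, i}, then b = c = d = 0 and the set of imaginary units of M equals { x·i + y·j + z·k : x, y, z ∈ ℝ, −x² + a(y² + z²) = −1 }. -/

import Mathlib

/-- The associator of a nonassociative algebra: `(x, y, z) = (xy)z - x(yz)`. -/
def assocator {A : Type*} [NonAssocRing A] (x y z : A) : A :=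
  x * y * z - x * (y * z)

set_option maxHeartbeats 2000000 in
/-- Lemma 2: in a real nonassociative unital algebra with basis `{1, i, j, k}` multiplying
according to table `(Tn)`, partially left and right alternative, if there is an imaginary
unit outside `span ℝ {1, i}`, then `b = c = d = 0` and the imaginary units are exactly
`x•i + y•j + z•k` with `-x² + a(y² + z²) = -1`. -/
theorem imaginaryUnits_eq_of_exists_outside {M : Type*} [NonAssocRing M] [Module ℝ M]
    [SMulCommClass ℝ M M] [IsScalarTower ℝ M M]
    (a b c d f g h e : ℝ) (B : Module.Basis (Fin 4) ℝ M) (i j k : M)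
    (hB0 : B 0 = 1) (hB1 : B 1 = i) (hB2 : B 2 = j) (hB3 : B 3 = k)
    (hii : i * i = -1) (hij : i * j = k) (hik : i * k = -j)
    (hji : j * i = -k) (hki : k * i = j)
    (hjj : j * j = a • (1 : M) + b • i + c • j + d • k)
    (hkk : k * k = a • (1 : M) + b • i + c • j + d • k)
    (hjk : j * k = f • (1 : M) + g • i + h • j + e • k)
    (hkj : k * j = -(f • (1 : M) + g • i + h • j + e • k))
    (hPA : ∀ q : M, q * q = -1 → ∀ y : M, assocator q q y = 0 ∧ assocator y q q = 0)
    (hout : ∃ q : M, q * q = -1 ∧ q ∉ Submodule.span ℝ ({1, i} : Set M)) :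
    b = 0 ∧ c = 0 ∧ d = 0 ∧
      {q : M | q * q = -1} =
        {q : M | ∃ x y z : ℝ, q = x • i + y • j + z • k ∧
          -x ^ 2 + a * (y ^ 2 + z ^ 2) = -1} := by
  classical
  obtain ⟨q, hqq, hqnot⟩ := hout
  -- coefficient extraction from basis
  have eqco : ∀ p0 p1 p2 p3 q0 q1 q2 q3 : ℝ,
      p0 • (1:M) + p1 • i + p2 • j + p3 • k = q0 • (1:M) + q1 • i + q2 • j + q3 • k →
      p0 = q0 ∧ p1 = q1 ∧ p2 = q2 ∧ p3 = q3 := by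
    intro p0 p1 p2 p3 q0 q1 q2 q3 hpq
    have li := B.linearIndependent
    rw [Fintype.linearIndependent_iff] at li
    have hz : ∑ n : Fin 4, ![p0-q0, p1-q1, p2-q2, p3-q3] n • B n = 0 := by
      rw [Fin.sum_univ_four, hB0, hB1, hB2, hB3]
      simp only [Matrix.cons_val_zero, Matrix.cons_val_one, Matrix.head_cons,
        Matrix.cons_val_two, Matrix.tail_cons, Matrix.cons_val_three]
      have hrw : (p0 - q0) • (1:M) + (p1-q1) • i + (p2-q2) • j + (p3-q3) • k
          = (p0 • (1:M) + p1 • i + p2 • j + p3 • k)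
            - (q0 • (1:M) + q1 • i + q2 • j + q3 • k) := by module
      rw [hrw, hpq, sub_self]
    have h4 := li _ hz
    have h0 := h4 0; have h1 := h4 1; have h2 := h4 2; have h3 := h4 3
    simp only [Matrix.cons_val_zero, Matrix.cons_val_one, Matrix.head_cons,
      Matrix.cons_val_two, Matrix.tail_cons, Matrix.cons_val_three] at h0 h1 h2 h3
    exact ⟨by linarith, by linarith, by linarith, by linarith⟩
  -- representation of arbitrary elements
  have rep : ∀ p : M, ∃ w x y z : ℝ, p = w • (1:M) + x • i + y • j + z • k := by
    intro p
    refine ⟨B.repr p 0, B.repr p 1, B.repr p 2, B.repr p 3, ?_⟩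
    have hsr := B.sum_repr p
    rw [Fin.sum_univ_four, hB0, hB1, hB2, hB3] at hsr
    exact hsr.symm
  -- square formula
  have sq : ∀ (p : M) (w x y z : ℝ), p = w • (1:M) + x • i + y • j + z • k →
      p * p = (w^2 - x^2 + (y^2+z^2)*a) • (1:M) + (2*w*x + (y^2+z^2)*b) • i
        + (2*w*y + (y^2+z^2)*c) • j + (2*w*z + (y^2+z^2)*d) • k := by
    intro p w x y z hp
    rw [hp]
    simp only [mul_add, add_mul, smul_mul_assoc, mul_smul_comm, hii, hij, hik, hji, hki,
      hjj, hkk, hjk, hkj, one_mul, mul_one]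
    module
  obtain ⟨w, x, y, z, hq⟩ := rep q
  have hqi : q * i = (-x) • (1:M) + w • i + z • j + (-y) • k := by
    rw [hq]; simp only [add_mul, smul_mul_assoc, hii, hji, hki, one_mul]; module
  have hqj : q * j = (y*a - z*f) • (1:M) + (y*b - z*g) • i + (w + y*c - z*h) • j
      + (x + y*d - z*e) • k := by
    rw [hq]; simp only [add_mul, smul_mul_assoc, hij, hjj, hkj, one_mul]; module
  have hqk : q * k = (y*f + z*a) • (1:M) + (y*g + z*b) • i + (-x + y*h + z*c) • j
      + (w + y*e + z*d) • k := by
    rw [hq]; simp only [add_mul, smul_mul_assoc, hik, hjk, hkk, one_mul]; module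
  have hiq : i * q = (-x) • (1:M) + w • i + (-z) • j + y • k := by
    rw [hq]; simp only [mul_add, mul_smul_comm, hii, hij, hik, mul_one]; module
  have hjq : j * q = (y*a + z*f) • (1:M) + (y*b + z*g) • i + (w + y*c + z*h) • j
      + (-x + y*d + z*e) • k := by
    rw [hq]; simp only [mul_add, mul_smul_comm, hji, hjj, hjk, mul_one]; module
  have hkq : k * q = (-(y*f) + z*a) • (1:M) + (-(y*g) + z*b) • i + (x - y*h + z*c) • j
      + (w - y*e + z*d) • k := by
    rw [hq]; simp only [mul_add, mul_smul_comm, hki, hkj, hkk, mul_one]; module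
  have hq2 := sq q w x y z hq
  have hqqiL : q*q*i = (-(2*w*x + (y^2+z^2)*b)) • (1:M) + (w^2 - x^2 + (y^2+z^2)*a) • i
      + (2*w*z + (y^2+z^2)*d) • j + (-(2*w*y + (y^2+z^2)*c)) • k := by
    rw [hq2]; simp only [add_mul, smul_mul_assoc, hii, hji, hki, one_mul]; module
  have hqqiR : q*(q*i) = (-(2*w*x) - (y^2+z^2)*f) • (1:M) + (w^2 - x^2 - (y^2+z^2)*g) • i
      + (2*w*z - (y^2+z^2)*h) • j + (-(2*w*y) - (y^2+z^2)*e) • k := by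
    rw [hqi]
    simp only [mul_add, mul_smul_comm, mul_one]
    rw [hqi, hqj, hqk, hq]
    module
  have hiqqL : i*q*q = (-(2*w*x) - (y^2+z^2)*f) • (1:M) + (w^2 - x^2 - (y^2+z^2)*g) • i
      + (-(2*w*z) - (y^2+z^2)*h) • j + (2*w*y - (y^2+z^2)*e) • k := by
    rw [hiq]
    simp only [add_mul, smul_mul_assoc, one_mul]
    rw [hiq, hjq, hkq, hq]
    module
  have hiqqR : i*(q*q) = (-(2*w*x + (y^2+z^2)*b)) • (1:M) + (w^2 - x^2 + (y^2+z^2)*a) • i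
      + (-(2*w*z + (y^2+z^2)*d)) • j + (2*w*y + (y^2+z^2)*c) • k := by
    rw [hq2]; simp only [mul_add, mul_smul_comm, hii, hij, hik, mul_one]; module
  have hqqjL : q*q*j = ((2*w*y + (y^2+z^2)*c)*a - (2*w*z + (y^2+z^2)*d)*f) • (1:M)
      + ((2*w*y + (y^2+z^2)*c)*b - (2*w*z + (y^2+z^2)*d)*g) • i
      + ((w^2 - x^2 + (y^2+z^2)*a) + (2*w*y + (y^2+z^2)*c)*c - (2*w*z + (y^2+z^2)*d)*h) • j
      + ((2*w*x + (y^2+z^2)*b) + (2*w*y + (y^2+z^2)*c)*d - (2*w*z + (y^2+z^2)*d)*e) • k := by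
    rw [hq2]; simp only [add_mul, smul_mul_assoc, hij, hjj, hkj, one_mul]; module
  have hqqjR : q*(q*j) =
      ((y*a - z*f)*w + (y*b - z*g)*(-x) + (w + y*c - z*h)*(y*a - z*f)
        + (x + y*d - z*e)*(y*f + z*a)) • (1:M)
      + ((y*a - z*f)*x + (y*b - z*g)*w + (w + y*c - z*h)*(y*b - z*g)
        + (x + y*d - z*e)*(y*g + z*b)) • i
      + ((y*a - z*f)*y + (y*b - z*g)*z + (w + y*c - z*h)*(w + y*c - z*h)
        + (x + y*d - z*e)*(-x + y*h + z*c)) • j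
      + ((y*a - z*f)*z + (y*b - z*g)*(-y) + (w + y*c - z*h)*(x + y*d - z*e)
        + (x + y*d - z*e)*(w + y*e + z*d)) • k := by
    rw [hqj]
    simp only [mul_add, mul_smul_comm, mul_one]
    rw [hqi, hqj, hqk, hq]
    module
  -- y, z are not both zero
  have hyz : ¬ (y = 0 ∧ z = 0) := by
    rintro ⟨hy0, hz0⟩
    apply hqnot
    have h1m : (1:M) ∈ Submodule.span ℝ ({1, i} : Set M) := Submodule.subset_span (by simp)
    have him : i ∈ Submodule.span ℝ ({1, i} : Set M) := Submodule.subset_span (by simp)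
    rw [hq, hy0, hz0]
    simp only [zero_smul, add_zero]
    exact Submodule.add_mem _ (Submodule.smul_mem _ w h1m) (Submodule.smul_mem _ x him)
  have hs : (y^2 + z^2 : ℝ) ≠ 0 := by
    intro h0
    exact hyz ⟨by nlinarith [sq_nonneg y, sq_nonneg z], by nlinarith [sq_nonneg y, sq_nonneg z]⟩
  have cancel : ∀ r : ℝ, r * (y^2+z^2) = 0 → r = 0 := fun r hr =>
    (mul_eq_zero.mp hr).resolve_right hs
  have hA1 := (hPA q hqq i).1
  have hA2 := (hPA q hqq i).2
  have hA3 := (hPA q hqq j).1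
  simp only [assocator, sub_eq_zero] at hA1 hA2 hA3
  rw [hqqiL, hqqiR] at hA1
  rw [hiqqL, hiqqR] at hA2
  rw [hqqjL, hqqjR] at hA3
  obtain ⟨e1, e2, e3, e4⟩ := eqco _ _ _ _ _ _ _ _ hA1
  obtain ⟨f1, f2, f3, f4⟩ := eqco _ _ _ _ _ _ _ _ hA2
  obtain ⟨g1, g2, g3, g4⟩ := eqco _ _ _ _ _ _ _ _ hA3
  have hd0 : d = 0 := cancel d (by linear_combination (e3 + f3)/2)
  have hh0 : h = 0 := cancel h (by linear_combination (e3 - f3)/2)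
  have hc0 : c = 0 := cancel c (by linear_combination -(e4 + f4)/2)
  have he0 : e = 0 := cancel e (by linear_combination (e4 - f4)/2)
  have hf0 : f = b := by
    have := cancel (f - b) (by linear_combination e1); linarith
  have hg0 : g = -a := by
    have := cancel (g + a) (by linear_combination e2); linarith
  rw [hc0, hd0, he0, hf0, hg0, hh0] at g4
  have hb0 : b = 0 := cancel b (by linear_combination g4/2)
  clear e1 e2 e3 e4 f1 f2 f3 f4 g1 g2 g3 g4 hqqiL hqqiR hiqqL hiqqR hqqjL hqqjR hqi hqj hqk hiq hjq hkq hq2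
  refine ⟨hb0, hc0, hd0, ?_⟩
  ext p
  simp only [Set.mem_setOf_eq]
  constructor
  · intro hp2
    obtain ⟨w', x', y', z', hp⟩ := rep p
    have hsq := sq p w' x' y' z' hp
    rw [hp2] at hsq
    have hm1 : (-1 : M) = (-1:ℝ) • (1:M) + (0:ℝ) • i + (0:ℝ) • j + (0:ℝ) • k := by module
    rw [hm1] at hsq
    obtain ⟨E0, E1, E2, E3⟩ := eqco _ _ _ _ _ _ _ _ hsq
    rw [hb0] at E1
    rw [hc0] at E2
    rw [hd0] at E3
    have hwx : w' * x' = 0 := by linear_combination (-1/2 : ℝ) * E1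
    have hwy : w' * y' = 0 := by linear_combination (-1/2 : ℝ) * E2
    have hwz : w' * z' = 0 := by linear_combination (-1/2 : ℝ) * E3
    by_cases hw : w' = 0
    · refine ⟨x', y', z', ?_, ?_⟩
      · rw [hp, hw]; module
      · linear_combination (-1 : ℝ) * E0 - w' * hw
    · exfalso
      have hx' : x' = 0 := (mul_eq_zero.mp hwx).resolve_left hw
      have hy' : y' = 0 := (mul_eq_zero.mp hwy).resolve_left hw
      have hz' : z' = 0 := (mul_eq_zero.mp hwz).resolve_left hw
      rw [hx', hy', hz'] at E0
      nlinarith [sq_nonneg w']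
  · rintro ⟨x', y', z', hpdef, hcond⟩
    have hp : p = (0:ℝ) • (1:M) + x' • i + y' • j + z' • k := by rw [hpdef]; module
    rw [sq p 0 x' y' z' hp]
    match_scalars
    all_goals first
      | linear_combination hcond
      | linear_combination (y'^2+z'^2) * hb0
      | linear_combination (y'^2+z'^2) * hc0
      | linear_combination (y'^2+z'^2) * hd0
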